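/- Let D be a finite digraph of order n with maximum out-degree Δ⁺(D) ≥ 1. Then L₂(D) ≥ ρ(D) + 1, i.e., the 2-limited packing number of D is at least one more than the packing number of D. -/
import Mathlib


open Finset

variable {V : Type*}

/-- The out-degree of `v` in the digraph with arc relation `A`. -/
def outDeg [Fintype V] (A : V → V → Prop) [DecidableRel A] (v : V) : ℕ :=
  (Finset.univ.filter fun u => A v u).card

/-- The in-degree of `v` in the digraph with arc relation `A`. -/
def inDeg [Fintype V] (A : V → V → Prop) [DecidableRel A] (v : V) : ℕ :=
  (Finset.univ.filter fun u => A u v).card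

/-- The minimum in-degree `δ⁻` of the digraph. -/
noncomputable def minInDeg [Fintype V] (A : V → V → Prop) [DecidableRel A] : ℕ :=
  sInf (Set.range fun v => inDeg A v)

/-- The maximum out-degree `Δ⁺` of the digraph. -/
noncomputable def maxOutDeg [Fintype V] (A : V → V → Prop) [DecidableRel A] : ℕ :=
  sSup (Set.range fun v => outDeg A v)

/-- The converse digraph `D⁻¹`, obtained by reversing every arc. -/
def converse (A : V → V → Prop) : V → V → Prop := fun u v => A v u

instance converseDecidable (A : V → V → Prop) [h : DecidableRel A] :
    DecidableRel (converse A) := fun u v => h v u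

/-- `B` is a `k`-limited packing: `|N⁺[v] ∩ B| ≤ k` for every vertex `v`. -/
def IsLimitedPacking [DecidableEq V] (A : V → V → Prop) [DecidableRel A] (k : ℕ)
    (B : Finset V) : Prop :=
  ∀ v : V, (B.filter fun u => u = v ∨ A v u).card ≤ k

/-- The `k`-limited packing number `L_k(D)` (`k = 1` gives the packing number `ρ(D)`). -/
noncomputable def limitedPackingNumber [Fintype V] [DecidableEq V] (A : V → V → Prop) [DecidableRel A]
    (k : ℕ) : ℕ :=
  sSup {m | ∃ B : Finset V, IsLimitedPacking A k B ∧ B.card = m}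

/-- `S` is an `r`-tuple dominating set: every vertex is dominated by at least `r`
vertices of `S` (where `u` dominates `v` if `u = v` or `(u,v)` is an arc). -/
def IsTupleDominating [DecidableEq V] (A : V → V → Prop) [DecidableRel A] (r : ℕ)
    (S : Finset V) : Prop :=
  ∀ v : V, r ≤ (S.filter fun u => u = v ∨ A u v).card

/-- The `r`-tuple domination number `γ×r(D)` (`r = 1` gives the domination number `γ(D)`,
`r = 2` the double domination number `γ×₂(D)`). -/
noncomputable def tupleDominationNumber [Fintype V] [DecidableEq V] (A : V → V → Prop) [DecidableRel A]
    (r : ℕ) : ℕ :=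
  sInf {m | ∃ S : Finset V, IsTupleDominating A r S ∧ S.card = m}

/-- `S` is a total 2-dominating set: the subdigraph induced by `S` has no isolated
vertices, and every vertex outside `S` has at least two in-neighbors in `S`. -/
def IsTotal2Dominating [DecidableEq V] (A : V → V → Prop) [DecidableRel A]
    (S : Finset V) : Prop :=
  (∀ v ∈ S, ∃ u ∈ S, u ≠ v ∧ (A u v ∨ A v u)) ∧
    ∀ v : V, v ∉ S → 2 ≤ (S.filter fun u => A u v).card

/-- The total 2-domination number `γ×₂ᵗ(D)`. -/
noncomputable def total2DominationNumber [Fintype V] [DecidableEq V] (A : V → V → Prop)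
    [DecidableRel A] : ℕ :=
  sInf {m | ∃ S : Finset V, IsTotal2Dominating A S ∧ S.card = m}

/-- `B` is a total 2-limited packing: every vertex of `B` is adjacent with at most one
vertex of `B`, and every vertex outside `B` has at most two out-neighbors in `B`. -/
def IsTotal2LimitedPacking [DecidableEq V] (A : V → V → Prop) [DecidableRel A]
    (B : Finset V) : Prop :=
  (∀ v ∈ B, (B.filter fun u => u ≠ v ∧ (A u v ∨ A v u)).card ≤ 1) ∧
    ∀ v : V, v ∉ B → (B.filter fun u => A v u).card ≤ 2

/-- The total 2-limited packing number `L₂ᵗ(D)`. -/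
noncomputable def total2LimitedPackingNumber [Fintype V] [DecidableEq V] (A : V → V → Prop)
    [DecidableRel A] : ℕ :=
  sSup {m | ∃ B : Finset V, IsTotal2LimitedPacking A B ∧ B.card = m}

/-- An end-vertex: a vertex `v` with `deg⁺(v) + deg⁻(v) = 1`. -/
def IsEndVertex [Fintype V] (A : V → V → Prop) [DecidableRel A] (v : V) : Prop :=
  outDeg A v + inDeg A v = 1

/-- A penultimate vertex: a vertex adjacent with an end-vertex. -/
def IsPenultimate [Fintype V] (A : V → V → Prop) [DecidableRel A] (v : V) : Prop :=
  ∃ u : V, IsEndVertex A u ∧ (A u v ∨ A v u)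
/-- If `Δ⁺(D) ≥ 1`, then `L₂(D) ≥ ρ(D) + 1`. -/
theorem stmt0 {V : Type*} [Fintype V] [DecidableEq V] (A : V → V → Prop) [DecidableRel A]
    (hloopless : ∀ v : V, ¬ A v v) (n : ℕ) (hn : Fintype.card V = n)
    (hΔ : 1 ≤ maxOutDeg A) :
    limitedPackingNumber A 1 + 1 ≤ limitedPackingNumber A 2 := by
  classical
  have hbdd : ∀ k, BddAbove {m | ∃ B : Finset V, IsLimitedPacking A k B ∧ B.card = m} := by
    intro k
    refine ⟨Fintype.card V, ?_⟩
    rintro m ⟨B, -, rfl⟩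
    exact B.card_le_univ
  have hne : {m | ∃ B : Finset V, IsLimitedPacking A 1 B ∧ B.card = m}.Nonempty := by
    refine ⟨0, ∅, ?_, rfl⟩
    intro v; simp [IsLimitedPacking]
  -- obtain a maximum packing B
  have hmem := Nat.sSup_mem hne (hbdd 1)
  obtain ⟨B, hB, hBcard⟩ := hmem
  -- there is a vertex with an out-neighbor
  have hΔ' : ∃ v u : V, A v u := by
    by_contra h
    push_neg at h
    have : maxOutDeg A = 0 := by
      unfold maxOutDeg
      have : (Set.range fun v => outDeg A v) ⊆ {0} := by
        rintro m ⟨v, rfl⟩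
        simp only [Set.mem_singleton_iff, outDeg]
        rw [Finset.card_eq_zero, Finset.filter_eq_empty_iff]
        intro u _; exact h v u
      rcases (Set.range fun v => outDeg A v).eq_empty_or_nonempty with he | hne2
      · simp [he]
      · have : (Set.range fun v => outDeg A v) = {0} :=
          Set.eq_singleton_iff_nonempty_unique_mem.mpr ⟨hne2, fun x hx => this hx⟩
        simp [this]
    omega
  obtain ⟨v, u, hvu⟩ := hΔ'
  -- B ≠ univ
  have hBne : B ≠ Finset.univ := by
    rintro rfl
    have := hB v
    have h2 : 2 ≤ (Finset.univ.filter fun w => w = v ∨ A v w).card := by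
      have hsub : ({u, v} : Finset V) ⊆ Finset.univ.filter fun w => w = v ∨ A v w := by
        intro x hx
        simp only [Finset.mem_insert, Finset.mem_singleton] at hx
        rcases hx with rfl | rfl <;> simp [hvu]
      have hcard : ({u, v} : Finset V).card = 2 :=
        Finset.card_pair (fun h => hloopless v (h ▸ hvu))
      calc 2 = ({u, v} : Finset V).card := hcard.symm
        _ ≤ _ := Finset.card_le_card hsub
    omega
  obtain ⟨w, hw⟩ : ∃ w, w ∉ B := by
    by_contra h
    push_neg at h
    exact hBne (Finset.eq_univ_iff_forall.mpr h)
  -- insert w B is a 2-limited packing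
  have h2lp : IsLimitedPacking A 2 (insert w B) := by
    intro x
    rw [Finset.filter_insert]
    split
    · rw [Finset.card_insert_of_notMem (fun h => hw (Finset.mem_of_mem_filter w h))]
      have := hB x; omega
    · have := hB x; omega
  have hcard : (insert w B).card = limitedPackingNumber A 1 + 1 := by
    rw [Finset.card_insert_of_notMem hw, hBcard]; rfl
  exact le_csSup (hbdd 2) ⟨insert w B, h2lp, hcard⟩
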